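/- Let f = Σ x_i p_{w_i} be a counting function on F_n of depth L with x_u = 0 whenever u starts with a_1 or a_1^{-1} or ends with a_1 or a_1^{-1} (and x_ε = 0). Then for every 'clean' reduced word w (one that neither starts nor ends with a_1^{±1}) and v = w a_1^L, one has f(v^k) = k·f(v) for all k ≥ 1. Consequently, if f is bounded then f(w a_1^L) = 0 for every clean word w. -/

import Mathlib

open List Finset

/-- Number of occurrences of `w` as a contiguous subword of `v`. -/
def occ {α : Type*} [DecidableEq α] (w v : List α) : ℕ :=
  ((List.range (v.length + 1 - w.length)).filter (fun i => decide (w <+: v.drop i))).length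

/-- Elementary counting function, with the convention `p_ε(v) = |v|`. -/
def cnt {α : Type*} [DecidableEq α] (w v : List α) : ℚ :=
  if w = [] then v.length else occ w v

/-- The inverse of a letter of `S̄`: letters are pairs (generator, sign). -/
def invL {n : ℕ} (a : Fin n × Bool) : Fin n × Bool := (a.1, !a.2)

/-- The inverse of a (reduced) word. -/
def invW {n : ℕ} (w : List (Fin n × Bool)) : List (Fin n × Bool) := (w.map invL).reverse

def redB {n : ℕ} : List (Fin n × Bool) → Bool
  | a :: b :: t => decide (b ≠ invL a) && redB (b :: t)
  | _ => true

/-- A word over `S̄` is reduced if no letter is followed by its inverse. -/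
def Red {n : ℕ} (w : List (Fin n × Bool)) : Prop := redB w = true

instance {n : ℕ} : DecidablePred (Red (n := n)) := fun _ => instDecidableEqBool _ _

/-- Left extension relation `l_w = p_w - Σ_{s : sw reduced} p_{sw}`. -/
def lgrp {n : ℕ} (w v : List (Fin n × Bool)) : ℚ :=
  cnt w v - ∑ s ∈ Finset.univ.filter (fun s => Red (s :: w)), cnt (s :: w) v

/-- Right extension relation `r_w = p_w - Σ_{s : ws reduced} p_{ws}`. -/
def rgrp {n : ℕ} (w v : List (Fin n × Bool)) : ℚ :=
  cnt w v - ∑ s ∈ Finset.univ.filter (fun s => Red (w ++ [s])), cnt (w ++ [s]) v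

/-- The map `σ₁` sending a function on F_n to `f - f ∘ (·⁻¹)`; on counting functions
it sends `p_w` to the Brooks quasimorphism `φ_w = p_w - p_{w⁻¹}`. -/
def sig1 {n : ℕ} (f : List (Fin n × Bool) → ℚ) : List (Fin n × Bool) → ℚ :=
  fun v => f v - f (invW v)

lemma occ_eq_countP {α : Type*} [DecidableEq α] (w v : List α) :
    occ w v = (List.range (v.length + 1 - w.length)).countP (fun i => decide (w <+: v.drop i)) := by
  rw [List.countP_eq_length_filter]; rfl

lemma head?_of_prefix {α : Type*} {u l : List α} (hu : u ≠ []) (h : u <+: l) :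
    l.head? = u.head? := by
  obtain ⟨t, rfl⟩ := h
  cases u with
  | nil => exact absurd rfl hu
  | cons a s => rfl

lemma prefix_drop_append_left {α : Type*} {u A B : List α} {i : ℕ}
    (h : i + u.length ≤ A.length) : (u <+: (A ++ B).drop i) ↔ (u <+: A.drop i) := by
  have hi : i ≤ A.length := by omega
  rw [List.drop_append_of_le_length hi]
  constructor
  · intro hp
    rw [List.prefix_iff_eq_take] at hp ⊢
    rwa [List.take_append_of_le_length (by simp; omega)] at hp
  · intro hp
    exact hp.trans (List.prefix_append _ _)

lemma occ_append {α : Type*} [DecidableEq α] (u A B : List α) (hu : u ≠ [])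
    (huA : u.length ≤ A.length) (huB : u.length ≤ B.length + 1)
    (hcross : ∀ i, A.length < i + u.length → i < A.length → ¬ u <+: (A ++ B).drop i) :
    occ u (A ++ B) = occ u A + occ u B := by
  have hu1 : 1 ≤ u.length := List.length_pos_iff.mpr hu
  rw [occ_eq_countP, occ_eq_countP, occ_eq_countP]
  rw [List.length_append]
  have h1 : A.length + B.length + 1 - u.length = A.length + (B.length + 1 - u.length) := by omega
  rw [h1, List.range_add, List.countP_append, List.countP_map]
  congr 1
  · -- part in A
    have h2 : A.length = (A.length + 1 - u.length) + (u.length - 1) := by omega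
    nth_rewrite 1 [h2]
    rw [List.range_add, List.countP_append]
    have hz : List.countP ((fun i => decide (u <+: (A ++ B).drop i)) ∘ fun x => A.length + 1 - u.length + x)
        (List.range (u.length - 1)) = 0 := by
      rw [List.countP_eq_zero]
      intro j hj
      simp only [List.mem_range] at hj
      simp only [Function.comp, decide_eq_true_eq]
      exact hcross _ (by omega) (by omega)
    rw [List.countP_map, hz, Nat.add_zero]
    apply List.countP_congr
    intro i hi
    simp only [List.mem_range] at hi
    simp only [decide_eq_true_eq]
    rw [prefix_drop_append_left (by omega)]
  · -- part in B
    apply List.countP_congr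
    intro j hj
    simp only [Function.comp, decide_eq_true_eq]
    rw [List.drop_append, List.drop_eq_nil_of_le (by omega), Nat.add_sub_cancel_left, List.nil_append]

lemma cross_aux {α : Type*} [DecidableEq α] (u w B : List α) (a : α) (L : ℕ)
    (hu : u ≠ []) (hlen : u.length ≤ L) (hhead : u.head? ≠ some a) :
    ∀ i, (w ++ List.replicate L a).length < i + u.length →
      i < (w ++ List.replicate L a).length →
      ¬ u <+: ((w ++ List.replicate L a) ++ B).drop i := by
  intro i h1 h2 hp
  have hlA : (w ++ List.replicate L a).length = w.length + L := by simp
  have hwi : w.length ≤ i := by omega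
  apply hhead
  have e1 : ((w ++ List.replicate L a ++ B).drop i).head? = u.head? :=
    head?_of_prefix hu hp
  rw [← e1, List.head?_drop, List.getElem?_append_left h2,
    List.getElem?_append_right hwi]
  have hiL : i - w.length < L := by omega
  rw [List.getElem?_eq_getElem (by simpa using hiL), List.getElem_replicate]

lemma occ_flatten {α : Type*} [DecidableEq α] (u w : List α) (a : α) (L : ℕ)
    (hu : u ≠ []) (hlen : u.length ≤ L) (hhead : u.head? ≠ some a) :
    ∀ k : ℕ, occ u (List.flatten (List.replicate (k + 1) (w ++ List.replicate L a))) =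
      (k + 1) * occ u (w ++ List.replicate L a) := by
  have hu1 : 1 ≤ u.length := List.length_pos_iff.mpr hu
  set Bl := w ++ List.replicate L a with hBl
  have hlB : L ≤ Bl.length := by simp [hBl]
  intro k
  induction k with
  | zero => simp
  | succ m ih =>
    have hrep : List.replicate (m + 2) Bl = Bl :: List.replicate (m + 1) Bl := rfl
    rw [hrep, List.flatten_cons]
    have hlV : (List.flatten (List.replicate (m + 1) Bl)).length = (m + 1) * Bl.length := by
      simp [List.length_flatten, List.map_replicate, List.sum_replicate, smul_eq_mul]
    rw [occ_append u Bl _ hu (by omega)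
      (by rw [hlV]; have : Bl.length ≤ (m + 1) * Bl.length := Nat.le_mul_of_pos_left _ m.succ_pos; omega)
      (cross_aux u w _ a L hu hlen hhead), ih]
    ring

lemma red_iff_chain' {n : ℕ} (l : List (Fin n × Bool)) :
    Red l ↔ l.Chain' (fun a b => b ≠ invL a) := by
  induction l with
  | nil => simp [Red, redB, List.Chain', List.isChain_nil]
  | cons a t ih =>
    cases t with
    | nil => simp [Red, redB, List.Chain', List.isChain_singleton]
    | cons b s =>
      simp only [List.Chain'] at ih ⊢
      rw [List.isChain_cons_cons, ← ih]
      show (decide (b ≠ invL a) && redB (b :: s)) = true ↔ _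
      rw [Bool.and_eq_true, decide_eq_true_eq]
      exact Iff.rfl

lemma chain'_replicate_of_rel {α : Type*} {R : α → α → Prop} {a : α} (h : R a a) :
    ∀ L, List.Chain' R (List.replicate L a)
  | 0 => List.isChain_nil
  | (m+1) => by
    rw [List.replicate_succ, List.Chain', List.isChain_cons]
    refine ⟨fun y hy => ?_, chain'_replicate_of_rel h m⟩
    have : y = a := by
      cases m with
      | zero => simp at hy
      | succ p => rw [List.replicate_succ] at hy; simp at hy; exact hy.symm
    rw [this]; exact h

lemma red_block {n : ℕ} (f0 : Fin n) (w : List (Fin n × Bool)) (L : ℕ)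
    (hw : Red w) (hlast : w.getLast? ≠ some (f0, false)) :
    Red (w ++ List.replicate L (f0, true)) := by
  rw [red_iff_chain'] at hw ⊢
  rw [List.Chain', List.isChain_append]
  refine ⟨hw, chain'_replicate_of_rel (by simp [invL]) L, ?_⟩
  intro xx hx y hy
  have hy' : y = (f0, true) := by
    cases L with
    | zero => simp at hy
    | succ m => rw [List.replicate_succ] at hy; simp at hy; exact hy.symm
  subst hy'
  intro hcon
  apply hlast
  obtain ⟨x1, x2⟩ := xx
  simp only [invL, Prod.mk.injEq] at hcon
  obtain ⟨h1, h2⟩ := hcon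
  have hx2 : x2 = false := by cases x2 with | false => rfl | true => simp at h2
  rw [Option.mem_def] at hx
  rw [hx, h1, hx2]

lemma red_power {n : ℕ} (f0 : Fin n) (w : List (Fin n × Bool)) (L : ℕ) (hL : 1 ≤ L)
    (hw : Red w) (hwne : w ≠ []) (hhead : w.head? ≠ some (f0, false))
    (hlast : w.getLast? ≠ some (f0, false)) :
    ∀ k : ℕ, Red (List.flatten (List.replicate (k + 1) (w ++ List.replicate L (f0, true)))) := by
  set Bl := w ++ List.replicate L (f0, true) with hBl
  have hBlred : Red Bl := red_block f0 w L hw hlast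
  have hBlne : Bl ≠ [] := by simp [hBl, hwne]
  have hBlast : Bl.getLast? = some (f0, true) := by
    obtain ⟨m, rfl⟩ : ∃ m, L = m + 1 := ⟨L - 1, by omega⟩
    rw [hBl, List.replicate_succ', ← List.append_assoc, List.getLast?_concat]
  intro k
  induction k with
  | zero => simpa using hBlred
  | succ m ih =>
    have hrep : List.replicate (m + 2) Bl = Bl :: List.replicate (m + 1) Bl := rfl
    rw [hrep, List.flatten_cons]
    rw [red_iff_chain'] at ih ⊢
    rw [List.Chain', List.isChain_append]
    refine ⟨(red_iff_chain' _).mp hBlred, ih, ?_⟩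
    intro xx hx y hy
    rw [Option.mem_def, hBlast, Option.some_inj] at hx
    subst hx
    have hVh : (List.flatten (List.replicate (m + 1) Bl)).head? = w.head? := by
      rw [show List.replicate (m + 1) Bl = Bl :: List.replicate m Bl from rfl,
        List.flatten_cons, List.head?_append_of_ne_nil _ hBlne, hBl,
        List.head?_append_of_ne_nil _ hwne]
    rw [Option.mem_def, hVh] at hy
    intro hcon
    apply hhead
    rw [hy, hcon]
    rfl

lemma main_lemma {n : ℕ} (x : List (Fin n × Bool) →₀ ℚ) (L : ℕ) (f0 : Fin n)
    (hsupp : ∀ u ∈ x.support, Red u ∧ u ≠ [] ∧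
      u.head? ≠ some (f0, true) ∧ u.head? ≠ some (f0, false) ∧
      u.getLast? ≠ some (f0, true) ∧ u.getLast? ≠ some (f0, false))
    (hdepth : ∀ u ∈ x.support, u.length ≤ L)
    (hatt : ∃ u ∈ x.support, u.length = L)
    (w : List (Fin n × Bool)) (hred : Red w) (hwne : w ≠ [])
    (hh2 : w.head? ≠ some (f0, false)) (hl2 : w.getLast? ≠ some (f0, false)) :
    (∀ k : ℕ, 1 ≤ k →
      ∑ u ∈ x.support, x u * (occ u (List.flatten (List.replicate k
          (w ++ List.replicate L (f0, true)))) : ℚ) =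
        k * ∑ u ∈ x.support, x u * (occ u (w ++ List.replicate L (f0, true)) : ℚ)) ∧
    ((∃ C : ℚ, ∀ v : List (Fin n × Bool), Red v →
        |∑ u ∈ x.support, x u * (occ u v : ℚ)| ≤ C) →
      ∑ u ∈ x.support, x u * (occ u (w ++ List.replicate L (f0, true)) : ℚ) = 0) := by
  have hL1 : 1 ≤ L := by
    obtain ⟨u, hu, hlenu⟩ := hatt
    have h1 := (hsupp u hu).2.1
    have h2 := List.length_pos_iff.mpr h1
    omega
  have key : ∀ k : ℕ, 1 ≤ k →
      ∑ u ∈ x.support, x u * (occ u (List.flatten (List.replicate k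
          (w ++ List.replicate L (f0, true)))) : ℚ) =
        k * ∑ u ∈ x.support, x u * (occ u (w ++ List.replicate L (f0, true)) : ℚ) := by
    intro k hk
    obtain ⟨m, rfl⟩ : ∃ m, k = m + 1 := ⟨k - 1, by omega⟩
    rw [Finset.mul_sum]
    refine Finset.sum_congr rfl fun u hu => ?_
    obtain ⟨-, hune, huh, -, -, -⟩ := hsupp u hu
    rw [occ_flatten u w (f0, true) L hune (hdepth u hu) huh m]
    push_cast
    ring
  refine ⟨key, ?_⟩
  rintro ⟨C, hC⟩
  by_contra hg
  have hpos : 0 < |∑ u ∈ x.support, x u * (occ u (w ++ List.replicate L (f0, true)) : ℚ)| :=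
    abs_pos.mpr hg
  obtain ⟨k, hk⟩ := exists_nat_gt
    (C / |∑ u ∈ x.support, x u * (occ u (w ++ List.replicate L (f0, true)) : ℚ)|)
  have h2 := hC _ (red_power f0 w L hL1 hred hwne hh2 hl2 k)
  rw [key (k + 1) (by omega), abs_mul, Nat.abs_cast] at h2
  rw [div_lt_iff₀ hpos] at hk
  push_cast at h2
  rw [add_mul, one_mul] at h2
  linarith

/-- If the coefficients of f vanish on words starting or ending with a₁^{±1} (and on ε),
then for every clean word w and v = w a₁^L (L the depth of f) one has f(v^k) = k f(v);
consequently, if f is bounded then f(w a₁^L) = 0 for every clean word w. -/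
theorem stmt_16 (n : ℕ) (hn : 2 ≤ n) (x : List (Fin n × Bool) →₀ ℚ) (L : ℕ)
    (hsupp : ∀ u ∈ x.support, Red u ∧ u ≠ [] ∧
      u.head? ≠ some ((⟨0, by omega⟩ : Fin n), true) ∧
      u.head? ≠ some ((⟨0, by omega⟩ : Fin n), false) ∧
      u.getLast? ≠ some ((⟨0, by omega⟩ : Fin n), true) ∧
      u.getLast? ≠ some ((⟨0, by omega⟩ : Fin n), false))
    (hdepth : ∀ u ∈ x.support, u.length ≤ L)
    (hatt : ∃ u ∈ x.support, u.length = L) :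
    ∀ w : List (Fin n × Bool), Red w → w ≠ [] →
      w.head? ≠ some ((⟨0, by omega⟩ : Fin n), true) →
      w.head? ≠ some ((⟨0, by omega⟩ : Fin n), false) →
      w.getLast? ≠ some ((⟨0, by omega⟩ : Fin n), true) →
      w.getLast? ≠ some ((⟨0, by omega⟩ : Fin n), false) →
      (∀ k : ℕ, 1 ≤ k →
        ∑ u ∈ x.support, x u * (occ u (List.flatten (List.replicate k
            (w ++ List.replicate L ((⟨0, by omega⟩ : Fin n), true)))) : ℚ) =
          k * ∑ u ∈ x.support, x u *
            (occ u (w ++ List.replicate L ((⟨0, by omega⟩ : Fin n), true)) : ℚ)) ∧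
      ((∃ C : ℚ, ∀ v : List (Fin n × Bool), Red v →
          |∑ u ∈ x.support, x u * (occ u v : ℚ)| ≤ C) →
        ∑ u ∈ x.support, x u *
          (occ u (w ++ List.replicate L ((⟨0, by omega⟩ : Fin n), true)) : ℚ) = 0) := by
  intro w hred hwne hh1 hh2 hl1 hl2
  exact main_lemma x L ⟨0, by omega⟩ hsupp hdepth hatt w hred hwne hh2 hl2
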